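/- Characterization of abstractions of type ♯𝔹→♯𝔹: a closed λ-abstraction λx.t⃗ belongs to ⟦♯𝔹→♯𝔹⟧ if and only if there exist value distributions v⃗₁, v⃗₂ ∈ ⟦♯𝔹⟧ such that t⃗[x:=tt] ≻≻ v⃗₁, t⃗[x:=ff] ≻≻ v⃗₂ and ⟨v⃗₁|v⃗₂⟩ = 0. -/
import Mathlib


namespace LinAlg

/-! ### Syntax: pure values, pure terms, term distributions -/

mutual
inductive Val : Type where
  | var : ℕ → Val
  | lam : ℕ → Distr → Val
  | star : Val
  | pair : Val → Val → Val
  | inl : Val → Val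
  | inr : Val → Val
inductive Term : Type where
  | val : Val → Term
  | app : Term → Term → Term
  | seq : Term → Distr → Term
  | letp : ℕ → ℕ → Term → Distr → Term
  | matc : Term → ℕ → Distr → ℕ → Distr → Term
inductive Distr : Type where
  | zero : Distr
  | single : Term → Distr
  | add : Distr → Distr → Distr
  | smul : ℂ → Distr → Distr
end

noncomputable instance : DecidableEq Val := fun _ _ => Classical.dec _
noncomputable instance : DecidableEq Term := fun _ _ => Classical.dec _
noncomputable instance : DecidableEq Distr := fun _ _ => Classical.dec _

/-! ### The shallow congruence ≡ on term distributions -/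

inductive Cong : Distr → Distr → Prop where
  | addZero (d : Distr) : Cong (d.add .zero) d
  | oneSmul (d : Distr) : Cong (Distr.smul 1 d) d
  | smulSmul (a b : ℂ) (d : Distr) : Cong (Distr.smul a (Distr.smul b d)) (Distr.smul (a * b) d)
  | addComm (d₁ d₂ : Distr) : Cong (d₁.add d₂) (d₂.add d₁)
  | addAssoc (d₁ d₂ d₃ : Distr) : Cong ((d₁.add d₂).add d₃) (d₁.add (d₂.add d₃))
  | smulDistrib (a b : ℂ) (d : Distr) : Cong (Distr.smul (a + b) d) ((Distr.smul a d).add (Distr.smul b d))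
  | smulAdd (a : ℂ) (d₁ d₂ : Distr) : Cong (Distr.smul a (d₁.add d₂)) ((Distr.smul a d₁).add (Distr.smul a d₂))
  | refl (d : Distr) : Cong d d
  | symm {d₁ d₂ : Distr} : Cong d₁ d₂ → Cong d₂ d₁
  | trans {d₁ d₂ d₃ : Distr} : Cong d₁ d₂ → Cong d₂ d₃ → Cong d₁ d₃
  | addCongr {d₁ d₁' d₂ d₂' : Distr} : Cong d₁ d₁' → Cong d₂ d₂' → Cong (d₁.add d₂) (d₁'.add d₂')
  | smulCongr (a : ℂ) {d d' : Distr} : Cong d d' → Cong (Distr.smul a d) (Distr.smul a d')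

/-! ### Free variables -/

mutual
def fvV : Val → Finset ℕ
  | .var y => {y}
  | .lam y b => fvD b \ {y}
  | .star => ∅
  | .pair v₁ v₂ => fvV v₁ ∪ fvV v₂
  | .inl v => fvV v
  | .inr v => fvV v
def fvT : Term → Finset ℕ
  | .val v => fvV v
  | .app s t => fvT s ∪ fvT t
  | .seq t s => fvT t ∪ fvD s
  | .letp y z t s => fvT t ∪ (fvD s \ {y, z})
  | .matc t y s₁ z s₂ => fvT t ∪ (fvD s₁ \ {y}) ∪ (fvD s₂ \ {z})
def fvD : Distr → Finset ℕ
  | .zero => ∅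
  | .single t => fvT t
  | .add d₁ d₂ => fvD d₁ ∪ fvD d₂
  | .smul _ d => fvD d
end

/-! ### Pure substitution -/

mutual
def substV (x : ℕ) (w : Val) : Val → Val
  | .var y => if y = x then w else .var y
  | .lam y b => if y = x then .lam y b else .lam y (substD x w b)
  | .star => .star
  | .pair v₁ v₂ => .pair (substV x w v₁) (substV x w v₂)
  | .inl v => .inl (substV x w v)
  | .inr v => .inr (substV x w v)
def substT (x : ℕ) (w : Val) : Term → Term
  | .val v => .val (substV x w v)
  | .app s t => .app (substT x w s) (substT x w t)
  | .seq t s => .seq (substT x w t) (substD x w s)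
  | .letp y z t s =>
      .letp y z (substT x w t) (if y = x ∨ z = x then s else substD x w s)
  | .matc t y s₁ z s₂ =>
      .matc (substT x w t) y (if y = x then s₁ else substD x w s₁)
        z (if z = x then s₂ else substD x w s₂)
def substD (x : ℕ) (w : Val) : Distr → Distr
  | .zero => .zero
  | .single t => .single (substT x w t)
  | .add d₁ d₂ => .add (substD x w d₁) (substD x w d₂)
  | .smul a d => .smul a (substD x w d)
end

/-! ### Linear extensions of the syntactic constructs -/

def appTD (s : Term) : Distr → Distr
  | .zero => .zero
  | .single t => .single (.app s t)
  | .add d₁ d₂ => .add (appTD s d₁) (appTD s d₂)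
  | .smul a d => .smul a (appTD s d)

def appDV : Distr → Val → Distr
  | .zero, _ => .zero
  | .single t, v => .single (.app t (.val v))
  | .add d₁ d₂, v => .add (appDV d₁ v) (appDV d₂ v)
  | .smul a d, v => .smul a (appDV d v)

def seqD : Distr → Distr → Distr
  | .zero, _ => .zero
  | .single t, s => .single (.seq t s)
  | .add d₁ d₂, s => .add (seqD d₁ s) (seqD d₂ s)
  | .smul a d, s => .smul a (seqD d s)

def letpD (x y : ℕ) : Distr → Distr → Distr
  | .zero, _ => .zero
  | .single t, s => .single (.letp x y t s)
  | .add d₁ d₂, s => .add (letpD x y d₁ s) (letpD x y d₂ s)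
  | .smul a d, s => .smul a (letpD x y d s)

def matcD : Distr → ℕ → Distr → ℕ → Distr → Distr
  | .zero, _, _, _, _ => .zero
  | .single t, y, s₁, z, s₂ => .single (.matc t y s₁ z s₂)
  | .add d₁ d₂, y, s₁, z, s₂ => .add (matcD d₁ y s₁ z s₂) (matcD d₂ y s₁ z s₂)
  | .smul a d, y, s₁, z, s₂ => .smul a (matcD d y s₁ z s₂)

/-- Bilinear application of distributions:  (Σᵢ αᵢ·tᵢ)(Σⱼ βⱼ·sⱼ) = Σᵢⱼ αᵢβⱼ·(tᵢ sⱼ). -/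
def appD : Distr → Distr → Distr
  | .zero, _ => .zero
  | .single t, w => appTD t w
  | .add d₁ d₂, w => .add (appD d₁ w) (appD d₂ w)
  | .smul a d, w => .smul a (appD d w)

/-- Bilinear substitution  d⟨x := w⃗⟩ = Σⱼ βⱼ · d[x := wⱼ]  (recursion on the value
distribution w⃗; non-value summands are junk and are sent to 0⃗). -/
def bsubst (x : ℕ) (d : Distr) : Distr → Distr
  | .zero => .zero
  | .single (.val w) => substD x w d
  | .single _ => .zero
  | .add w₁ w₂ => .add (bsubst x d w₁) (bsubst x d w₂)
  | .smul a w => .smul a (bsubst x d w)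

/-! ### Evaluation -/

inductive Atom : Term → Distr → Prop where
  | beta (x : ℕ) (b : Distr) (v : Val) :
      Atom (.app (.val (.lam x b)) (.val v)) (substD x v b)
  | seqStar (s : Distr) : Atom (.seq (.val .star) s) s
  | letPair (x y : ℕ) (v w : Val) (s : Distr) :
      Atom (.letp x y (.val (.pair v w)) s) (substD y w (substD x v s))
  | matchInl (v : Val) (y : ℕ) (s₁ : Distr) (z : ℕ) (s₂ : Distr) :
      Atom (.matc (.val (.inl v)) y s₁ z s₂) (substD y v s₁)
  | matchInr (v : Val) (y : ℕ) (s₁ : Distr) (z : ℕ) (s₂ : Distr) :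
      Atom (.matc (.val (.inr v)) y s₁ z s₂) (substD z v s₂)
  | appR (s : Term) {t : Term} {d : Distr} : Atom t d → Atom (.app s t) (appTD s d)
  | appL (v : Val) {t : Term} {d : Distr} : Atom t d → Atom (.app t (.val v)) (appDV d v)
  | seqC (s : Distr) {t : Term} {d : Distr} : Atom t d → Atom (.seq t s) (seqD d s)
  | letC (x y : ℕ) (s : Distr) {t : Term} {d : Distr} :
      Atom t d → Atom (.letp x y t s) (letpD x y d s)
  | matcC (y : ℕ) (s₁ : Distr) (z : ℕ) (s₂ : Distr) {t : Term} {d : Distr} :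
      Atom t d → Atom (.matc t y s₁ z s₂) (matcD d y s₁ z s₂)

/-- One-step evaluation:  t⃗ ≻ t⃗′. -/
def Step (d d' : Distr) : Prop :=
  ∃ (a : ℂ) (s : Term) (s' r : Distr),
    Cong d (Distr.add (.smul a (.single s)) r) ∧
    Cong d' (Distr.add (.smul a s') r) ∧ Atom s s'

/-- Evaluation  t⃗ ≻≻ t⃗′:  reflexive-transitive closure of one-step evaluation. -/
def Eval : Distr → Distr → Prop := Relation.ReflTransGen Step

/-! ### Value distributions, inner product, norm -/

def IsValT : Term → Prop
  | .val _ => True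
  | _ => False

def IsValD : Distr → Prop
  | .zero => True
  | .single t => IsValT t
  | .add d₁ d₂ => IsValD d₁ ∧ IsValD d₂
  | .smul _ d => IsValD d

/-- The set of closed value distributions. -/
def ClosedValD : Set Distr := {d | IsValD d ∧ fvD d = ∅}

/-- Total coefficient of the pure term `t` in the distribution `d`. -/
noncomputable def coeff : Distr → Term → ℂ
  | .zero, _ => 0
  | .single s, t => if s = t then 1 else 0
  | .add d₁ d₂, t => coeff d₁ t + coeff d₂ t
  | .smul a d, t => a * coeff d t

/-- The domain of a distribution (all pure terms occurring in it, even with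
coefficient 0). -/
noncomputable def domD : Distr → Finset Term
  | .zero => ∅
  | .single t => {t}
  | .add d₁ d₂ => domD d₁ ∪ domD d₂
  | .smul _ d => domD d

/-- The inner product ⟨v⃗|w⃗⟩ on value distributions. -/
noncomputable def innerD (v w : Distr) : ℂ :=
  ∑ t ∈ domD v, (starRingEnd ℂ) (coeff v t) * coeff w t

/-- The pseudo-ℓ²-norm ‖v⃗‖. -/
noncomputable def normD (v : Distr) : ℝ := Real.sqrt (innerD v v).re

/-- The unit sphere S of closed value distributions of norm 1. -/
def Sphere : Set Distr := {d | d ∈ ClosedValD ∧ normD d = 1}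

/-- Span(X): weak linear combinations of elements of X (taken modulo ≡). -/
inductive Span (X : Set Distr) : Distr → Prop where
  | mem {d : Distr} : d ∈ X → Span X d
  | zero : Span X .zero
  | add {d₁ d₂ : Distr} : Span X d₁ → Span X d₂ → Span X (d₁.add d₂)
  | smul (a : ℂ) {d : Distr} : Span X d → Span X (Distr.smul a d)
  | congr {d d' : Distr} : Span X d → Cong d d' → Span X d'

/-! ### Realizability: unitary types -/

/-- t⃗ ⊩ A :  t⃗ evaluates to some vector of ⟦A⟧. -/
def Realizes (A : Set Distr) (t : Distr) : Prop := ∃ v ∈ A, Eval t v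

/-- |A| : the set of (closed) realizers of A. -/
def realizersOf (A : Set Distr) : Set Distr := {t | fvD t = ∅ ∧ Realizes A t}

/-! ### Type constructors -/

def UnitT : Set Distr := {Distr.single (.val .star)}

/-- ♭A : the basis of A. -/
def flatT (X : Set Distr) : Set Distr :=
  {e | ∃ d ∈ X, ∃ v : Val, (Term.val v) ∈ domD d ∧ e = Distr.single (.val v)}

/-- ♯A : the unitary span of A. -/
def sharpT (X : Set Distr) : Set Distr := {d | Span X d ∧ d ∈ Sphere}

/-- Linear extension of a value constructor. -/
def mapVD (f : Val → Val) : Distr → Distr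
  | .zero => .zero
  | .single (.val v) => .single (.val (f v))
  | .single t => .single t
  | .add d₁ d₂ => .add (mapVD f d₁) (mapVD f d₂)
  | .smul a d => .smul a (mapVD f d)

def inlD : Distr → Distr := mapVD Val.inl
def inrD : Distr → Distr := mapVD Val.inr

/-- Bilinear extension of pairing. -/
def pairD : Distr → Distr → Distr
  | .zero, _ => .zero
  | .single (.val v), w => mapVD (Val.pair v) w
  | .single t, _ => .single t
  | .add d₁ d₂, w => .add (pairD d₁ w) (pairD d₂ w)
  | .smul a d, w => .smul a (pairD d w)

/-- A + B (simple sum). -/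
def plusT (A B : Set Distr) : Set Distr :=
  {d | (∃ v ∈ A, d = inlD v) ∨ (∃ w ∈ B, d = inrD w)}

/-- A × B (simple product). -/
def timesT (A B : Set Distr) : Set Distr :=
  {d | ∃ v ∈ A, ∃ w ∈ B, d = pairD v w}

/-- A → B (pure arrow). -/
def arrowT (A B : Set Distr) : Set Distr :=
  {d | ∃ (x : ℕ) (b : Distr), d = Distr.single (.val (.lam x b)) ∧ fvD d = ∅ ∧
      ∀ v ∈ A, Realizes B (bsubst x b v)}

/-- Σᵢ αᵢ · λx.t⃗ᵢ  ↦  Σᵢ αᵢ · t⃗ᵢ  (strips the λx in front of each summand). -/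
def stripLam (x : ℕ) : Distr → Distr
  | .zero => .zero
  | .single (.val (.lam y b)) => if y = x then b else .single (.val (.lam y b))
  | .single t => .single t
  | .add d₁ d₂ => .add (stripLam x d₁) (stripLam x d₂)
  | .smul a d => .smul a (stripLam x d)

/-- A ⇒ B (unitary arrow). -/
def uarrowT (A B : Set Distr) : Set Distr :=
  {d | d ∈ Sphere ∧ ∃ x : ℕ,
      (∀ t ∈ domD d, ∃ b : Distr, t = Term.val (.lam x b)) ∧
      ∀ v ∈ A, Realizes B (bsubst x (stripLam x d) v)}

/-! ### Booleans -/

def ttD : Distr := .single (.val (.inl .star))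
def ffD : Distr := .single (.val (.inr .star))

/-- 𝔹 = 𝕌 + 𝕌. -/
def BoolT : Set Distr := plusT UnitT UnitT

/-- ♯𝔹, the type of unitary Booleans. -/
def sharpBool : Set Distr := sharpT BoolT

/-- Boolean projection π : Span({tt,ff}) → ℂ². -/
noncomputable def piB (d : Distr) : ℂ × ℂ :=
  (coeff d (.val (.inl .star)), coeff d (.val (.inr .star)))

/-- t⃗ represents the operator F : ℂ² → ℂ². -/
def Represents (td : Distr) (F : ℂ × ℂ → ℂ × ℂ) : Prop :=
  ∀ v, Span BoolT v → ∃ w, Span BoolT w ∧ Eval (appD td v) w ∧ piB w = F (piB v)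

/-- Hermitian inner product on ℂ². -/
def hinner (u v : ℂ × ℂ) : ℂ :=
  (starRingEnd ℂ) u.1 * v.1 + (starRingEnd ℂ) u.2 * v.2

/-- A unitary operator on ℂ². -/
def IsUnitaryOp (F : ℂ × ℂ → ℂ × ℂ) : Prop :=
  ∀ u v : ℂ × ℂ, hinner (F u) (F v) = hinner u v

/-! ### Typing contexts, substitutions, judgments -/

abbrev Ctx := List (ℕ × Set Distr)
abbrev Subst := List (ℕ × Distr)

/-- Applying a substitution, one bilinear substitution at a time. -/
def applySub : Distr → Subst → Distr
  | d, [] => d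
  | d, (x, w) :: σ => applySub (bsubst x d w) σ

/-- σ ∈ ⟦Γ⟧. -/
def SubMem (σ : Subst) (Γ : Ctx) : Prop :=
  List.Forall₂ (fun p q => p.1 = q.1 ∧ p.2 ∈ q.2) σ Γ

def ctxDom (Γ : Ctx) : Set ℕ := {x | ∃ A, (x, A) ∈ Γ}

/-- dom♯(Γ): the variables of Γ whose type is not a pure-value type. -/
def ctxDomSharp (Γ : Ctx) : Set ℕ := {x | ∃ A, (x, A) ∈ Γ ∧ flatT A ≠ A}

/-- All the types of the context are unitary types (subsets of the sphere). -/
def CtxUnitary (Γ : Ctx) : Prop := ∀ p ∈ Γ, p.2 ⊆ Sphere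

/-- Validity of the typing judgment  Γ ⊢ t⃗ : A. -/
def ValidJ (Γ : Ctx) (t : Distr) (A : Set Distr) : Prop :=
  ctxDomSharp Γ ⊆ (fvD t : Set ℕ) ∧ (fvD t : Set ℕ) ⊆ ctxDom Γ ∧
  ∀ σ : Subst, SubMem σ Γ → Realizes A (applySub t σ)

/-- Validity of the orthogonality judgment  Γ | Δ₁ ⊢ t⃗₁ ⊥ Δ₂ ⊢ t⃗₂ : A. -/
def OrthoJ (Γ Δ₁ Δ₂ : Ctx) (t₁ t₂ : Distr) (A : Set Distr) : Prop :=
  ValidJ (Γ ++ Δ₁) t₁ A ∧ ValidJ (Γ ++ Δ₂) t₂ A ∧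
  ∀ σ σ₁ σ₂ : Subst, SubMem σ Γ → SubMem σ₁ Δ₁ → SubMem σ₂ Δ₂ →
    ∀ v₁ v₂ : Distr, v₁ ∈ ClosedValD → v₂ ∈ ClosedValD →
      Eval (applySub t₁ (σ ++ σ₁)) v₁ → Eval (applySub t₂ (σ ++ σ₂)) v₂ →
      innerD v₁ v₂ = 0

end LinAlg

namespace LinAlg

def liftC (h : Term → ℂ) : Distr → ℂ
  | .zero => 0
  | .single t => h t
  | .add d₁ d₂ => liftC h d₁ + liftC h d₂
  | .smul a d => a * liftC h d

theorem cong_liftC {h : Term → ℂ} {d d' : Distr} (hc : Cong d d') :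
    liftC h d = liftC h d' := by
  induction hc <;> simp [liftC, *] <;> ring

theorem cong_domD {d d' : Distr} (hc : Cong d d') : domD d = domD d' := by
  induction hc with
  | addComm d₁ d₂ => exact Finset.union_comm _ _
  | _ => simp [domD, Finset.union_assoc, *]

theorem coeff_eq_liftC : ∀ (d : Distr) (u : Term),
    coeff d u = liftC (fun t => if t = u then 1 else 0) d
  | .zero, u => rfl
  | .single t, u => rfl
  | .add d₁ d₂, u => by
      simp only [coeff, liftC, coeff_eq_liftC d₁ u, coeff_eq_liftC d₂ u]
  | .smul a d, u => by simp only [coeff, liftC, coeff_eq_liftC d u]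

theorem cong_coeff {d d' : Distr} (hc : Cong d d') (u : Term) :
    coeff d u = coeff d' u := by
  rw [coeff_eq_liftC, coeff_eq_liftC]; exact cong_liftC hc

theorem cong_fvD {d d' : Distr} (hc : Cong d d') : fvD d = fvD d' := by
  induction hc with
  | addComm d₁ d₂ => exact Finset.union_comm _ _
  | _ => simp [fvD, Finset.union_assoc, *]

theorem cong_isValD {d d' : Distr} (hc : Cong d d') : IsValD d ↔ IsValD d' := by
  induction hc <;> simp [IsValD, *] <;> tauto

end LinAlg
namespace LinAlg

theorem coeff_eq_zero_of_not_mem : ∀ {d : Distr} {t : Term},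
    t ∉ domD d → coeff d t = 0
  | .zero, t, _ => rfl
  | .single s, t, h => by
      simp [domD] at h
      simp [coeff, Ne.symm h]
  | .add d₁ d₂, t, h => by
      simp [domD] at h
      simp [coeff, coeff_eq_zero_of_not_mem h.1, coeff_eq_zero_of_not_mem h.2]
  | .smul a d, t, h => by
      simp [domD] at h
      simp [coeff, coeff_eq_zero_of_not_mem h]

theorem innerD_eq_sum {v w : Distr} {S : Finset Term} (h : domD v ⊆ S) :
    innerD v w = ∑ t ∈ S, (starRingEnd ℂ) (coeff v t) * coeff w t := by
  rw [innerD]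
  refine Finset.sum_subset h fun t _ ht => ?_
  rw [coeff_eq_zero_of_not_mem ht, map_zero, zero_mul]

theorem innerD_congr_coeff {v v' w w' : Distr}
    (hv : ∀ u, coeff v u = coeff v' u) (hw : ∀ u, coeff w u = coeff w' u) :
    innerD v w = innerD v' w' := by
  rw [innerD_eq_sum (S := domD v ∪ domD v') Finset.subset_union_left,
      innerD_eq_sum (S := domD v ∪ domD v') Finset.subset_union_right]
  exact Finset.sum_congr rfl fun t _ => by rw [hv, hw]

theorem innerD_conj (v w : Distr) :
    innerD w v = (starRingEnd ℂ) (innerD v w) := by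
  rw [innerD_eq_sum (v := w) (S := domD v ∪ domD w) Finset.subset_union_right,
      innerD_eq_sum (v := v) (S := domD v ∪ domD w) Finset.subset_union_left,
      map_sum]
  exact Finset.sum_congr rfl fun t _ => by
    rw [map_mul, RingHomCompTriple.comp_apply, RingHom.id_apply]; ring

theorem innerD_smul_left (a : ℂ) (v w : Distr) :
    innerD (Distr.smul a v) w = (starRingEnd ℂ) a * innerD v w := by
  rw [innerD, innerD]
  show ∑ t ∈ domD v, _ = _
  rw [Finset.mul_sum]
  exact Finset.sum_congr rfl fun t _ => by simp [coeff, map_mul]; ring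

theorem innerD_smul_right (a : ℂ) (v w : Distr) :
    innerD v (Distr.smul a w) = a * innerD v w := by
  rw [innerD, innerD, Finset.mul_sum]
  exact Finset.sum_congr rfl fun t _ => by simp [coeff]; ring

theorem innerD_add_right (v w₁ w₂ : Distr) :
    innerD v (w₁.add w₂) = innerD v w₁ + innerD v w₂ := by
  rw [innerD, innerD, innerD, ← Finset.sum_add_distrib]
  exact Finset.sum_congr rfl fun t _ => by simp [coeff]; ring

theorem innerD_add_left (v₁ v₂ w : Distr) :
    innerD (v₁.add v₂) w = innerD v₁ w + innerD v₂ w := by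
  rw [innerD_eq_sum (v := v₁) (S := domD v₁ ∪ domD v₂) Finset.subset_union_left,
      innerD_eq_sum (v := v₂) (S := domD v₁ ∪ domD v₂) Finset.subset_union_right,
      innerD_eq_sum (v := v₁.add v₂) (S := domD v₁ ∪ domD v₂) (by rw [show domD (v₁.add v₂) = domD v₁ ∪ domD v₂ from by simp [domD]]),
      ← Finset.sum_add_distrib]
  exact Finset.sum_congr rfl fun t _ => by simp [coeff, map_add]; ring

theorem innerD_self_eq_one {v : Distr} (h : normD v = 1) : innerD v v = 1 := by
  have hre : innerD v v = ((∑ t ∈ domD v, Complex.normSq (coeff v t) : ℝ) : ℂ) := by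
    rw [innerD, Complex.ofReal_sum]
    exact Finset.sum_congr rfl fun t _ => (Complex.normSq_eq_conj_mul_self (z := coeff v t)).symm
  have h' : Real.sqrt (∑ t ∈ domD v, Complex.normSq (coeff v t) : ℝ) = 1 := by
    have h2 := h; rw [normD, hre] at h2; simpa using h2
  have hs : (∑ t ∈ domD v, Complex.normSq (coeff v t) : ℝ) = 1 := by
    have hnn : 0 ≤ (∑ t ∈ domD v, Complex.normSq (coeff v t) : ℝ) :=
      Finset.sum_nonneg fun t _ => Complex.normSq_nonneg _
    nlinarith [Real.sq_sqrt hnn, h']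
  rw [hre, hs]; norm_num

end LinAlg
namespace LinAlg

/-! ### Step and Eval compatibility lemmas -/

theorem step_cong {d d' e : Distr} (hc : Cong d' d) (h : Step d e) : Step d' e := by
  obtain ⟨a, s, s', r, h1, h2, h3⟩ := h
  exact ⟨a, s, s', r, hc.trans h1, h2, h3⟩

theorem step_add_left {d d' : Distr} (e : Distr) (h : Step d d') :
    Step (d.add e) (d'.add e) := by
  obtain ⟨a, s, s', r, h1, h2, h3⟩ := h
  exact ⟨a, s, s', r.add e,
    ((h1.addCongr (Cong.refl e)).trans (Cong.addAssoc _ _ _)),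
    ((h2.addCongr (Cong.refl e)).trans (Cong.addAssoc _ _ _)), h3⟩

theorem step_add_right {d d' : Distr} (e : Distr) (h : Step d d') :
    Step (e.add d) (e.add d') := by
  obtain ⟨a, s, s', r, h1, h2, h3⟩ := h
  exact ⟨a, s, s', r.add e,
    ((Cong.addComm e d).trans ((h1.addCongr (Cong.refl e)).trans (Cong.addAssoc _ _ _))),
    ((Cong.addComm e d').trans ((h2.addCongr (Cong.refl e)).trans (Cong.addAssoc _ _ _))), h3⟩

theorem step_smul {d d' : Distr} (c : ℂ) (h : Step d d') :
    Step (Distr.smul c d) (Distr.smul c d') := by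
  obtain ⟨a, s, s', r, h1, h2, h3⟩ := h
  refine ⟨c * a, s, s', Distr.smul c r, ?_, ?_, h3⟩
  · exact (Cong.smulCongr c h1).trans ((Cong.smulAdd c _ _).trans
      ((Cong.smulSmul c a _).addCongr (Cong.refl _)))
  · exact (Cong.smulCongr c h2).trans ((Cong.smulAdd c _ _).trans
      ((Cong.smulSmul c a _).addCongr (Cong.refl _)))

theorem eval_add_left {d d' : Distr} (e : Distr) (h : Eval d d') :
    Eval (d.add e) (d'.add e) := by
  induction h with
  | refl => exact Relation.ReflTransGen.refl
  | tail _ hstep ih => exact ih.tail (step_add_left e hstep)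

theorem eval_add_right {d d' : Distr} (e : Distr) (h : Eval d d') :
    Eval (e.add d) (e.add d') := by
  induction h with
  | refl => exact Relation.ReflTransGen.refl
  | tail _ hstep ih => exact ih.tail (step_add_right e hstep)

theorem eval_smul {d d' : Distr} (c : ℂ) (h : Eval d d') :
    Eval (Distr.smul c d) (Distr.smul c d') := by
  induction h with
  | refl => exact Relation.ReflTransGen.refl
  | tail _ hstep ih => exact ih.tail (step_smul c hstep)

theorem eval_add {d d' e e' : Distr} (h : Eval d d') (h' : Eval e e') :
    Eval (d.add e) (d'.add e') :=
  (eval_add_left e h).trans (eval_add_right d' h')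

end LinAlg
namespace LinAlg

/-! ### Determinism of atomic evaluation -/

theorem atom_not_val {v : Val} {d : Distr} (h : Atom (.val v) d) : False := by
  cases h

theorem atom_det {s : Term} {d d' : Distr} (h : Atom s d) (h' : Atom s d') : d = d' := by
  induction h generalizing d' with
  | beta x b v => cases h' with
    | beta => rfl
    | appR _ h => exact absurd h atom_not_val
    | appL _ h => exact absurd h atom_not_val
  | seqStar s => cases h' with
    | seqStar => rfl
    | seqC _ h => exact absurd h atom_not_val
  | letPair x y v w s => cases h' with
    | letPair => rfl
    | letC _ _ _ h => exact absurd h atom_not_val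
  | matchInl v y s₁ z s₂ => cases h' with
    | matchInl => rfl
    | matcC _ _ _ _ h => exact absurd h atom_not_val
  | matchInr v y s₁ z s₂ => cases h' with
    | matchInr => rfl
    | matcC _ _ _ _ h => exact absurd h atom_not_val
  | appR s hA ih => cases h' with
    | beta => exact absurd hA atom_not_val
    | appR _ h => rw [ih h]
    | appL _ h => exact absurd hA atom_not_val
  | appL v hA ih => cases h' with
    | beta => exact absurd hA atom_not_val
    | appR _ h => exact absurd h atom_not_val
    | appL _ h => rw [ih h]
  | seqC s hA ih => cases h' with
    | seqStar => exact absurd hA atom_not_val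
    | seqC _ h => rw [ih h]
  | letC x y s hA ih => cases h' with
    | letPair => exact absurd hA atom_not_val
    | letC _ _ _ h => rw [ih h]
  | matcC y s₁ z s₂ hA ih => cases h' with
    | matchInl => exact absurd hA atom_not_val
    | matchInr => exact absurd hA atom_not_val
    | matcC _ _ _ _ h => rw [ih h]

/-! ### Normal-form coefficients -/

inductive Norm : Term → (Term → ℂ) → Prop where
  | val (v : Val) : Norm (.val v) (fun u => if u = .val v then 1 else 0)
  | step {s : Term} {d : Distr} (g : Term → Term → ℂ) :
      Atom s d → (∀ t ∈ domD d, Norm t (g t)) →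
      Norm s (fun u => liftC (fun t => g t u) d)

theorem liftC_congr {h h' : Term → ℂ} : ∀ {d : Distr},
    (∀ t ∈ domD d, h t = h' t) → liftC h d = liftC h' d
  | .zero, _ => rfl
  | .single t, hh => hh t (by simp [domD])
  | .add d₁ d₂, hh => by
      rw [liftC, liftC, liftC_congr (fun t ht => hh t (by simp [domD, ht])),
        liftC_congr (fun t ht => hh t (by simp [domD, ht]))]
  | .smul a d, hh => by
      rw [liftC, liftC, liftC_congr (fun t ht => hh t (by simp [domD, ht]))]

theorem norm_det {s : Term} {f f' : Term → ℂ} (h : Norm s f) (h' : Norm s f') : f = f' := by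
  induction h generalizing f' with
  | val v => cases h' with
    | val => rfl
    | step _ hA _ => exact absurd hA atom_not_val
  | step g hA hg ih => cases h' with
    | val => exact absurd hA atom_not_val
    | step g' hA' hg' =>
      cases atom_det hA hA'
      funext u
      exact liftC_congr fun t ht => congrFun (ih t ht (hg' t ht)) u

open Classical in
noncomputable def nfc (s : Term) : Term → ℂ :=
  if h : ∃ f, Norm s f then h.choose else 0

theorem nfc_spec {s : Term} {f : Term → ℂ} (h : Norm s f) : nfc s = f := by
  classical
  rw [nfc]
  rw [dif_pos (⟨f, h⟩ : ∃ f, Norm s f)]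
  exact norm_det (⟨f, h⟩ : ∃ f, Norm s f).choose_spec h

/-- Weak normalization of a pure term. -/
def WN (s : Term) : Prop := ∃ f, Norm s f

theorem norm_nfc {s : Term} (h : WN s) : Norm s (nfc s) := by
  obtain ⟨f, hf⟩ := h; rw [nfc_spec hf]; exact hf

end LinAlg
namespace LinAlg

theorem step_invariance {d d' : Distr} (h : Step d d')
    (hWN : ∀ t ∈ domD d', WN t) :
    (∀ t ∈ domD d, WN t) ∧
      ∀ u, liftC (fun s => nfc s u) d = liftC (fun s => nfc s u) d' := by
  obtain ⟨a, s, s', r, h1, h2, h3⟩ := h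
  have hd : domD d = {s} ∪ domD r := by rw [cong_domD h1]; simp [domD]
  have hd' : domD d' = domD s' ∪ domD r := by rw [cong_domD h2]; simp [domD]
  have hWNs' : ∀ t ∈ domD s', WN t := fun t ht => hWN t (by rw [hd']; simp [ht])
  have hWNr : ∀ t ∈ domD r, WN t := fun t ht => hWN t (by rw [hd']; simp [ht])
  have hNs : Norm s (fun u => liftC (fun t => nfc t u) s') :=
    Norm.step (fun t => nfc t) h3 (fun t ht => norm_nfc (hWNs' t ht))
  constructor
  · intro t ht
    rw [hd] at ht
    rcases Finset.mem_union.mp ht with ht | ht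
    · rw [Finset.mem_singleton.mp ht]; exact ⟨_, hNs⟩
    · exact hWNr t ht
  · intro u
    rw [cong_liftC h1, cong_liftC h2]
    simp only [liftC]
    rw [nfc_spec hNs]

theorem isValD_domD : ∀ {d : Distr}, IsValD d → ∀ t ∈ domD d, ∃ v : Val, t = .val v
  | .zero, _, t, ht => by simp [domD] at ht
  | .single s, hv, t, ht => by
      have hts : t = s := by simpa [domD] using ht
      subst hts
      cases t with
      | val v => exact ⟨v, rfl⟩
      | _ => simp [IsValD, IsValT] at hv
  | .add d₁ d₂, hv, t, ht => by
      rcases Finset.mem_union.mp (by simpa [domD] using ht) with ht | ht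
      · exact isValD_domD hv.1 t ht
      · exact isValD_domD hv.2 t ht
  | .smul a d, hv, t, ht => isValD_domD (d := d) hv t (by simpa [domD] using ht)

theorem eval_coeff {d v : Distr} (hE : Eval d v) (hv : IsValD v) :
    (∀ t ∈ domD d, WN t) ∧ ∀ u, liftC (fun s => nfc s u) d = coeff v u := by
  induction hE using Relation.ReflTransGen.head_induction_on with
  | refl =>
    constructor
    · intro t ht
      obtain ⟨w, rfl⟩ := isValD_domD hv t ht
      exact ⟨_, Norm.val w⟩
    · intro u
      rw [coeff_eq_liftC]
      refine liftC_congr fun t ht => ?_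
      obtain ⟨w, rfl⟩ := isValD_domD hv t ht
      rw [nfc_spec (Norm.val w)]
      simp [eq_comm]
  | head hstep _ ih =>
    obtain ⟨hWN, hco⟩ := ih
    obtain ⟨hWN', heq⟩ := step_invariance hstep hWN
    exact ⟨hWN', fun u => (heq u).trans (hco u)⟩

/-- Uniqueness of the coefficients of evaluation results. -/
theorem eval_unique_coeff {d v w : Distr} (h1 : Eval d v) (h2 : Eval d w)
    (hv : IsValD v) (hw : IsValD w) : ∀ u, coeff v u = coeff w u := by
  intro u
  rw [← (eval_coeff h1 hv).2 u, (eval_coeff h2 hw).2 u]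

end LinAlg
namespace LinAlg

theorem bsubst_cong (x : ℕ) (b : Distr) {w w' : Distr} (hc : Cong w w') :
    Cong (bsubst x b w) (bsubst x b w') := by
  induction hc with
  | addZero d => exact Cong.addZero _
  | oneSmul d => exact Cong.oneSmul _
  | smulSmul a c d => exact Cong.smulSmul a c _
  | addComm d₁ d₂ => exact Cong.addComm _ _
  | addAssoc d₁ d₂ d₃ => exact Cong.addAssoc _ _ _
  | smulDistrib a c d => exact Cong.smulDistrib a c _
  | smulAdd a d₁ d₂ => exact Cong.smulAdd a _ _
  | refl d => exact Cong.refl _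
  | symm _ ih => exact ih.symm
  | trans _ _ ih₁ ih₂ => exact ih₁.trans ih₂
  | addCongr _ _ ih₁ ih₂ => exact ih₁.addCongr ih₂
  | smulCongr a _ ih => exact ih.smulCongr a

/-- Abbreviations for the boolean value terms. -/
def tvT : Term := .val (.inl .star)
def ffT : Term := .val (.inr .star)

theorem tvT_ne_ffT : tvT ≠ ffT := by simp [tvT, ffT]

theorem span_bool_domD {v : Distr} (h : Span BoolT v) :
    domD v ⊆ {tvT, ffT} := by
  induction h with
  | mem hm =>
    rcases hm with ⟨u, hu, rfl⟩ | ⟨u, hu, rfl⟩ <;>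
      rw [Set.mem_singleton_iff.mp hu] <;>
      simp [inlD, inrD, mapVD, domD, tvT, ffT]
  | zero => simp [domD]
  | add _ _ ih₁ ih₂ => simpa [domD] using Finset.union_subset ih₁ ih₂
  | smul a _ ih => simpa [domD] using ih
  | congr _ hc ih => rwa [cong_domD hc] at ih

theorem ttD_mem_boolT : ttD ∈ BoolT := Or.inl ⟨.single (.val .star), rfl, rfl⟩
theorem ffD_mem_boolT : ffD ∈ BoolT := Or.inr ⟨.single (.val .star), rfl, rfl⟩

theorem innerD_ttD_ttD : innerD ttD ttD = 1 := by
  simp [innerD, ttD, domD, coeff]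
theorem innerD_ttD_ffD : innerD ttD ffD = 0 := by
  simp [innerD, ttD, ffD, domD, coeff]
theorem innerD_ffD_ttD : innerD ffD ttD = 0 := by
  simp [innerD, ttD, ffD, domD, coeff]
theorem innerD_ffD_ffD : innerD ffD ffD = 1 := by
  simp [innerD, ffD, domD, coeff]

theorem normD_one_of_innerD {v : Distr} (h : innerD v v = 1) : normD v = 1 := by
  rw [normD, h]; simp

theorem ttD_closedVal : ttD ∈ ClosedValD :=
  ⟨by simp [ttD, IsValD, IsValT], by simp [ttD, fvD, fvT, fvV]⟩
theorem ffD_closedVal : ffD ∈ ClosedValD :=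
  ⟨by simp [ffD, IsValD, IsValT], by simp [ffD, fvD, fvT, fvV]⟩

theorem ttD_mem_sharpBool : ttD ∈ sharpBool :=
  ⟨Span.mem ttD_mem_boolT, ttD_closedVal, normD_one_of_innerD innerD_ttD_ttD⟩
theorem ffD_mem_sharpBool : ffD ∈ sharpBool :=
  ⟨Span.mem ffD_mem_boolT, ffD_closedVal, normD_one_of_innerD innerD_ffD_ffD⟩

end LinAlg
namespace LinAlg

/-- The coefficient 1/√2 as a complex number. -/
noncomputable def cC : ℂ := ((Real.sqrt 2)⁻¹ : ℝ)

theorem conj_cC : (starRingEnd ℂ) cC = cC := Complex.conj_ofReal _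

theorem cC_mul_cC : cC * cC = 1 / 2 := by
  rw [cC, ← Complex.ofReal_mul, ← Real.sqrt_inv, Real.mul_self_sqrt (by norm_num)]
  norm_num

/-- The superposition (tt + ff)/√2. -/
noncomputable def uPlus : Distr := .smul cC (ttD.add ffD)
/-- The superposition (tt + i·ff)/√2. -/
noncomputable def uI : Distr := .smul cC (ttD.add (.smul Complex.I ffD))

theorem innerD_uPlus : innerD uPlus uPlus = 1 := by
  rw [uPlus, innerD_smul_left, innerD_smul_right, innerD_add_left,
    innerD_add_right, innerD_add_right, innerD_ttD_ttD, innerD_ttD_ffD,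
    innerD_ffD_ttD, innerD_ffD_ffD, conj_cC]
  linear_combination (2:ℂ) * cC_mul_cC

theorem innerD_uI : innerD uI uI = 1 := by
  rw [uI, innerD_smul_left, innerD_smul_right, innerD_add_left,
    innerD_add_right, innerD_add_right, innerD_smul_left, innerD_smul_right,
    innerD_smul_left, innerD_smul_right, innerD_ttD_ttD, innerD_ttD_ffD,
    innerD_ffD_ttD, innerD_ffD_ffD, conj_cC, Complex.conj_I]
  linear_combination (2:ℂ) * cC_mul_cC - cC * cC * Complex.I_mul_I

theorem uPlus_mem_sharpBool : uPlus ∈ sharpBool := by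
  refine ⟨Span.smul cC ((Span.mem ttD_mem_boolT).add (Span.mem ffD_mem_boolT)), ⟨?_, ?_⟩,
    normD_one_of_innerD innerD_uPlus⟩
  · simp [uPlus, ttD, ffD, IsValD, IsValT]
  · simp [uPlus, ttD, ffD, fvD, fvT, fvV]

theorem uI_mem_sharpBool : uI ∈ sharpBool := by
  refine ⟨Span.smul cC ((Span.mem ttD_mem_boolT).add (Span.smul _ (Span.mem ffD_mem_boolT))), ⟨?_, ?_⟩,
    normD_one_of_innerD innerD_uI⟩
  · simp [uI, ttD, ffD, IsValD, IsValT]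
  · simp [uI, ttD, ffD, fvD, fvT, fvV]

end LinAlg
namespace LinAlg

theorem isValD_of_sharpBool {v : Distr} (h : v ∈ sharpBool) : IsValD v := h.2.1.1

theorem isValD_smul (a : ℂ) {d : Distr} (h : IsValD d) : IsValD (Distr.smul a d) := by
  simpa [IsValD] using h

theorem isValD_add {d₁ d₂ : Distr} (h₁ : IsValD d₁) (h₂ : IsValD d₂) :
    IsValD (d₁.add d₂) := by
  simp [IsValD]; exact ⟨h₁, h₂⟩
theorem normD_of_sharpBool {v : Distr} (h : v ∈ sharpBool) : normD v = 1 := h.2.2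

theorem forward_dir (x : ℕ) (b : Distr)
    (harrow : Distr.single (.val (.lam x b)) ∈ arrowT sharpBool sharpBool) :
    ∃ v₁ v₂ : Distr, v₁ ∈ sharpBool ∧ v₂ ∈ sharpBool ∧
      Eval (substD x (.inl .star) b) v₁ ∧
      Eval (substD x (.inr .star) b) v₂ ∧
      innerD v₁ v₂ = 0 := by
  obtain ⟨x', b', heq, hcl, hr⟩ := harrow
  have hxb : x = x' ∧ b = b' := by
    simpa [Distr.single.injEq, Term.val.injEq, Val.lam.injEq] using heq
  obtain ⟨rfl, rfl⟩ := hxb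
  obtain ⟨v₁, hv₁, hE₁⟩ := hr ttD ttD_mem_sharpBool
  obtain ⟨v₂, hv₂, hE₂⟩ := hr ffD ffD_mem_sharpBool
  obtain ⟨w, hw, hEw⟩ := hr uPlus uPlus_mem_sharpBool
  obtain ⟨wi, hwi, hEwi⟩ := hr uI uI_mem_sharpBool
  have hE₁' : Eval (substD x (.inl .star) b) v₁ := hE₁
  have hE₂' : Eval (substD x (.inr .star) b) v₂ := hE₂
  set W : Distr := Distr.smul cC (v₁.add v₂) with hWdef
  set Wi : Distr := Distr.smul cC (v₁.add (Distr.smul Complex.I v₂)) with hWidef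
  have hvalW : IsValD W := isValD_smul _ (isValD_add (isValD_of_sharpBool hv₁) (isValD_of_sharpBool hv₂))
  have hvalWi : IsValD Wi := isValD_smul _ (isValD_add (isValD_of_sharpBool hv₁)
    (isValD_smul _ (isValD_of_sharpBool hv₂)))
  have hEW : Eval (bsubst x b uPlus) W := by
    rw [uPlus]; exact eval_smul cC (eval_add hE₁ hE₂)
  have hEWi : Eval (bsubst x b uI) Wi := by
    rw [uI]; exact eval_smul cC (eval_add hE₁ (eval_smul Complex.I hE₂))
  have hco : ∀ u, coeff w u = coeff W u :=
    eval_unique_coeff hEw hEW (isValD_of_sharpBool hw) hvalW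
  have hcoi : ∀ u, coeff wi u = coeff Wi u :=
    eval_unique_coeff hEwi hEWi (isValD_of_sharpBool hwi) hvalWi
  set z : ℂ := innerD v₁ v₂ with hz
  have hWW : innerD W W = cC * cC * (2 + z + (starRingEnd ℂ) z) := by
    rw [hWdef, innerD_smul_left, innerD_smul_right, innerD_add_left,
      innerD_add_right, innerD_add_right,
      innerD_self_eq_one (normD_of_sharpBool hv₁),
      innerD_self_eq_one (normD_of_sharpBool hv₂),
      innerD_conj v₁ v₂, conj_cC]
    ring
  have hWiWi : innerD Wi Wi
      = cC * cC * (1 + Complex.I * z - Complex.I * (starRingEnd ℂ) z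
          - Complex.I * Complex.I) := by
    rw [hWidef, innerD_smul_left, innerD_smul_right, innerD_add_left,
      innerD_add_right, innerD_add_right, innerD_smul_left, innerD_smul_right,
      innerD_smul_left, innerD_smul_right,
      innerD_self_eq_one (normD_of_sharpBool hv₁),
      innerD_self_eq_one (normD_of_sharpBool hv₂),
      innerD_conj v₁ v₂, conj_cC, Complex.conj_I]
    ring
  have e1 : cC * cC * (2 + z + (starRingEnd ℂ) z) = 1 :=
    hWW.symm.trans ((innerD_congr_coeff hco hco).symm.trans
      (innerD_self_eq_one (normD_of_sharpBool hw)))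
  have e2 : cC * cC * (1 + Complex.I * z - Complex.I * (starRingEnd ℂ) z
      - Complex.I * Complex.I) = 1 :=
    hWiWi.symm.trans ((innerD_congr_coeff hcoi hcoi).symm.trans
      (innerD_self_eq_one (normD_of_sharpBool hwi)))
  have hzsum : z + (starRingEnd ℂ) z = 0 := by
    linear_combination (2:ℂ) * e1 - 2*(2 + z + (starRingEnd ℂ) z) * cC_mul_cC
  have hI0 : Complex.I * (z - (starRingEnd ℂ) z) = 0 := by
    linear_combination (2:ℂ) * e2
      - 2*(1 + Complex.I * z - Complex.I * (starRingEnd ℂ) z - Complex.I * Complex.I) * cC_mul_cC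
      + Complex.I_mul_I
  have hzdiff : z - (starRingEnd ℂ) z = 0 :=
    (mul_eq_zero.mp hI0).resolve_left Complex.I_ne_zero
  have hz0 : z = 0 := by linear_combination (1/2 : ℂ) * hzsum + (1/2 : ℂ) * hzdiff
  exact ⟨v₁, v₂, hv₁, hv₂, hE₁', hE₂', hz0⟩

end LinAlg
namespace LinAlg

theorem inlD_star : inlD (Distr.single (.val .star)) = ttD := rfl
theorem inrD_star : inrD (Distr.single (.val .star)) = ffD := rfl
theorem bsubst_ttD (x : ℕ) (b : Distr) :
    bsubst x b ttD = substD x (.inl .star) b := rfl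
theorem bsubst_ffD (x : ℕ) (b : Distr) :
    bsubst x b ffD = substD x (.inr .star) b := rfl

theorem coeff_ttD_tvT : coeff ttD tvT = 1 := by simp [ttD, coeff, tvT]
theorem coeff_ttD_ffT : coeff ttD ffT = 0 := by simp [ttD, coeff, ffT]
theorem coeff_ffD_tvT : coeff ffD tvT = 0 := by simp [ffD, coeff, tvT]
theorem coeff_ffD_ffT : coeff ffD ffT = 1 := by simp [ffD, coeff, ffT]

theorem rev_main (x : ℕ) (b v₁ v₂ : Distr)
    (hv₁ : v₁ ∈ sharpBool) (hv₂ : v₂ ∈ sharpBool)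
    (hE₁ : Eval (substD x (.inl .star) b) v₁)
    (hE₂ : Eval (substD x (.inr .star) b) v₂) :
    ∀ v, Span BoolT v → ∃ w, Eval (bsubst x b v) w ∧ Span BoolT w ∧
      IsValD w ∧ fvD w = ∅ ∧
      ∀ u, coeff w u = coeff v tvT * coeff v₁ u + coeff v ffT * coeff v₂ u := by
  intro v hv
  induction hv with
  | @mem d hm =>
    rcases hm with ⟨u, hu, rfl⟩ | ⟨u, hu, rfl⟩
    · rw [Set.mem_singleton_iff.mp hu, inlD_star]
      refine ⟨v₁, by rw [bsubst_ttD]; exact hE₁, hv₁.1, hv₁.2.1.1, hv₁.2.1.2, fun u => ?_⟩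
      rw [coeff_ttD_tvT, coeff_ttD_ffT]; ring
    · rw [Set.mem_singleton_iff.mp hu, inrD_star]
      refine ⟨v₂, by rw [bsubst_ffD]; exact hE₂, hv₂.1, hv₂.2.1.1, hv₂.2.1.2, fun u => ?_⟩
      rw [coeff_ffD_tvT, coeff_ffD_ffT]; ring
  | zero =>
    refine ⟨.zero, Relation.ReflTransGen.refl, Span.zero, trivial, rfl, fun u => ?_⟩
    simp [coeff]
  | @add d₁ d₂ _ _ ih₁ ih₂ =>
    obtain ⟨w₁, hEv₁, hSp₁, hVal₁, hFv₁, hCo₁⟩ := ih₁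
    obtain ⟨w₂, hEv₂, hSp₂, hVal₂, hFv₂, hCo₂⟩ := ih₂
    refine ⟨w₁.add w₂, eval_add hEv₁ hEv₂, hSp₁.add hSp₂, isValD_add hVal₁ hVal₂,
      by simp [fvD, hFv₁, hFv₂], fun u => ?_⟩
    simp only [coeff, hCo₁ u, hCo₂ u]; ring
  | @smul a d _ ih =>
    obtain ⟨w, hEv, hSp, hVal, hFv, hCo⟩ := ih
    refine ⟨.smul a w, eval_smul a hEv, hSp.smul a, isValD_smul a hVal,
      by simp [fvD, hFv], fun u => ?_⟩
    simp only [coeff, hCo u]; ring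
  | @congr d d' _ hc ih =>
    obtain ⟨w, hEv, hSp, hVal, hFv, hCo⟩ := ih
    rcases hEv.cases_head with heq | ⟨e, hstep, hrest⟩
    · -- bsubst x b d = w (no step); use the congruent distribution itself
      have hcw : Cong w (bsubst x b d') := heq ▸ bsubst_cong x b hc
      refine ⟨bsubst x b d', Relation.ReflTransGen.refl, hSp.congr hcw,
        (cong_isValD hcw).mp hVal, by rw [← cong_fvD hcw]; exact hFv, fun u => ?_⟩
      rw [← cong_coeff hcw u, hCo u, cong_coeff hc tvT, cong_coeff hc ffT]
    · have hstep' : Step (bsubst x b d') e := step_cong (bsubst_cong x b hc).symm hstep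
      refine ⟨w, Relation.ReflTransGen.head hstep' hrest, hSp, hVal, hFv, fun u => ?_⟩
      rw [hCo u, cong_coeff hc tvT, cong_coeff hc ffT]

end LinAlg
namespace LinAlg

theorem backward_dir (x : ℕ) (b : Distr)
    (hclosed : fvD (Distr.single (.val (.lam x b))) = ∅)
    (v₁ v₂ : Distr) (hv₁ : v₁ ∈ sharpBool) (hv₂ : v₂ ∈ sharpBool)
    (hE₁ : Eval (substD x (.inl .star) b) v₁)
    (hE₂ : Eval (substD x (.inr .star) b) v₂)
    (horth : innerD v₁ v₂ = 0) :
    Distr.single (.val (.lam x b)) ∈ arrowT sharpBool sharpBool := by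
  refine ⟨x, b, rfl, hclosed, ?_⟩
  intro v hv
  obtain ⟨hSp, hCVD, hNv⟩ := hv
  obtain ⟨w, hEv, hSpw, hValw, hFvw, hCow⟩ := rev_main x b v₁ v₂ hv₁ hv₂ hE₁ hE₂ v hSp
  refine ⟨w, ⟨hSpw, ⟨hValw, hFvw⟩, ?_⟩, hEv⟩
  apply normD_one_of_innerD
  set α := coeff v tvT with hα
  set β := coeff v ffT with hβ
  set W : Distr := (Distr.smul α v₁).add (Distr.smul β v₂) with hWdef
  have hcoW : ∀ u, coeff w u = coeff W u := by
    intro u; rw [hCow u]; simp [hWdef, coeff]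
  have h21 : innerD v₂ v₁ = 0 := by rw [innerD_conj v₁ v₂, horth, map_zero]
  have hWW : innerD W W = (starRingEnd ℂ) α * α + (starRingEnd ℂ) β * β := by
    rw [hWdef]
    simp only [innerD_add_left, innerD_add_right, innerD_smul_left,
      innerD_smul_right, innerD_self_eq_one (normD_of_sharpBool hv₁),
      innerD_self_eq_one (normD_of_sharpBool hv₂), horth, h21]
    ring
  have hvv : innerD v v = (starRingEnd ℂ) α * α + (starRingEnd ℂ) β * β := by
    rw [innerD_eq_sum (span_bool_domD hSp), Finset.sum_pair tvT_ne_ffT]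
  rw [innerD_congr_coeff hcoW hcoW, hWW, ← hvv]
  exact innerD_self_eq_one hNv

theorem charac_sharpBool_arrow' (x : ℕ) (b : Distr)
    (hclosed : fvD (Distr.single (.val (.lam x b))) = ∅) :
    Distr.single (.val (.lam x b)) ∈ arrowT sharpBool sharpBool ↔
      ∃ v₁ v₂ : Distr, v₁ ∈ sharpBool ∧ v₂ ∈ sharpBool ∧
        Eval (substD x (.inl .star) b) v₁ ∧
        Eval (substD x (.inr .star) b) v₂ ∧
        innerD v₁ v₂ = 0 := by
  constructor
  · exact forward_dir x b
  · rintro ⟨v₁, v₂, hv₁, hv₂, hE₁, hE₂, horth⟩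
    exact backward_dir x b hclosed v₁ v₂ hv₁ hv₂ hE₁ hE₂ horth

end LinAlg

namespace LinAlg

/-- Characterization of the abstractions of type ♯𝔹→♯𝔹. -/
theorem charac_sharpBool_arrow (x : ℕ) (b : Distr)
    (hclosed : fvD (Distr.single (.val (.lam x b))) = ∅) :
    Distr.single (.val (.lam x b)) ∈ arrowT sharpBool sharpBool ↔
      ∃ v₁ v₂ : Distr, v₁ ∈ sharpBool ∧ v₂ ∈ sharpBool ∧
        Eval (substD x (.inl .star) b) v₁ ∧
        Eval (substD x (.inr .star) b) v₂ ∧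
        innerD v₁ v₂ = 0 :=
  charac_sharpBool_arrow' x b hclosed

end LinAlg
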